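/- Let K be a field, let A₀, B₀ be n×n matrices over K, and let λ, m, m̄ ∈ K with λ = m·m̄, m ≠ 0 and m̄ ≠ 0. Suppose row vectors v₃ and v̄₃ satisfy v₃·(B₀·A₀) = λ·v₃ and v̄₃·(A₀·B₀) = λ·v̄₃. Define v := v₃ + m⁻¹·(v̄₃·A₀) and v̄ := v̄₃ + m̄⁻¹·(v₃·B₀). Then v·B₀ = m̄·v̄ and v̄·A₀ = m·v (the paper's construction of a vector v(x) in a two-dimensional eigenspace satisfying v(x)·P₀(1/x) = m₀(x)·v(1/x)). -/

import Mathlib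

open Matrix

/-- The paper's construction of a vector `v(x)` in a two-dimensional eigenspace
satisfying `v(x)·P₀(1/x) = m₀(x)·v(1/x)`: if `v₃·(B₀·A₀) = λ·v₃`,
`v̄₃·(A₀·B₀) = λ·v̄₃` with `λ = m·m̄`, `m ≠ 0`, `m̄ ≠ 0`, then
`v := v₃ + m⁻¹·(v̄₃·A₀)` and `v̄ := v̄₃ + m̄⁻¹·(v₃·B₀)` satisfy
`v·B₀ = m̄·v̄` and `v̄·A₀ = m·v`. -/
theorem stmt_11 {K : Type*} [Field K] {n : Type*} [Fintype n] [DecidableEq n]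
    (A₀ B₀ : Matrix n n K) (lam m mbar : K)
    (hlam : lam = m * mbar) (hm : m ≠ 0) (hmbar : mbar ≠ 0)
    (v₃ vbar₃ : n → K)
    (hv₃ : v₃ ᵥ* (B₀ * A₀) = lam • v₃)
    (hvbar₃ : vbar₃ ᵥ* (A₀ * B₀) = lam • vbar₃) :
    (v₃ + m⁻¹ • (vbar₃ ᵥ* A₀)) ᵥ* B₀ = mbar • (vbar₃ + mbar⁻¹ • (v₃ ᵥ* B₀)) ∧
      (vbar₃ + mbar⁻¹ • (v₃ ᵥ* B₀)) ᵥ* A₀ = m • (v₃ + m⁻¹ • (vbar₃ ᵥ* A₀)) := by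
  constructor
  · rw [add_vecMul, smul_vecMul, vecMul_vecMul, hvbar₃, hlam]
    match_scalars <;> field_simp
  · rw [add_vecMul, smul_vecMul, vecMul_vecMul, hv₃, hlam]
    match_scalars <;> field_simp
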